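/- Let T be a bounded operator on a complex Hilbert space H. Then w((|T| - |T*|)/2 + i·Re T) ≤ (1/2)‖|T| + |T*|‖, where Re T = (T + T*)/2, |T| = (T*T)^{1/2}, |T*| = (TT*)^{1/2}, and w denotes the numerical radius. -/

import Mathlib

set_option maxHeartbeats 1000000
set_option synthInstance.maxHeartbeats 200000

open scoped ComplexOrder
open ContinuousLinearMap (adjoint)

variable {H K : Type*} [NormedAddCommGroup H] [InnerProductSpace ℂ H] [CompleteSpace H]
  [NormedAddCommGroup K] [InnerProductSpace ℂ K] [CompleteSpace K]

/-- The numerical radius of a bounded operator. -/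
noncomputable def numRad {E : Type*} [NormedAddCommGroup E] [InnerProductSpace ℂ E]
    (T : E →L[ℂ] E) : ℝ :=
  ⨆ x : {x : E // ‖x‖ = 1}, ‖(inner ℂ (T x.1) x.1 : ℂ)‖

section Aux

local notation "⟪" x ", " y "⟫" => @inner ℂ _ _ x y


lemma aeval_comm' {R A : Type*} [CommSemiring R] [Semiring A] [Algebra R A]
    {P Q t : A} (h : t * P = Q * t) (q : Polynomial R) :
    t * Polynomial.aeval P q = Polynomial.aeval Q q * t := by
  have hp : ∀ m : ℕ, t * P ^ m = Q ^ m * t := by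
    intro m; induction m with
    | zero => simp
    | succ m ihm => rw [pow_succ, ← mul_assoc, ihm, mul_assoc, h, ← mul_assoc, ← pow_succ]
  induction q using Polynomial.induction_on with
  | C r => simp [Algebra.commutes]
  | add q₁ q₂ h₁ h₂ => simp [mul_add, add_mul, h₁, h₂]
  | monomial n r _ =>
    simp only [map_mul, Polynomial.aeval_C, map_pow, Polynomial.aeval_X]
    calc t * (algebraMap R A r * P ^ (n+1)) = algebraMap R A r * (t * P ^ (n+1)) := by
          rw [← mul_assoc, ← Algebra.commutes, mul_assoc]
      _ = algebraMap R A r * Q ^ (n+1) * t := by rw [hp, mul_assoc]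

lemma intertwine_cfc [Nontrivial H] {P Q t : H →L[ℂ] H} (hP : 0 ≤ P) (hQ : 0 ≤ Q)
    (h : t * P = Q * t) {f : ℝ → ℝ} (hf : Continuous f) : t * cfc f P = cfc f Q * t := by
  set M : ℝ := max ‖P‖ ‖Q‖ with hM
  have hspP : spectrum ℝ P ⊆ Set.Icc 0 M := fun x hx =>
    ⟨spectrum_nonneg_of_nonneg hP hx,
      le_trans (le_trans (le_abs_self x) (spectrum.norm_le_norm_of_mem hx)) (le_max_left _ _)⟩
  have hspQ : spectrum ℝ Q ⊆ Set.Icc 0 M := fun x hx =>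
    ⟨spectrum_nonneg_of_nonneg hQ hx,
      le_trans (le_trans (le_abs_self x) (spectrum.norm_le_norm_of_mem hx)) (le_max_right _ _)⟩
  let fM : C(Set.Icc (0:ℝ) M, ℝ) := ContinuousMap.restrict _ ⟨f, hf⟩
  have hmem : fM ∈ closure (polynomialFunctions (Set.Icc (0:ℝ) M) : Set C(Set.Icc (0:ℝ) M, ℝ)) := by
    have h1 := polynomialFunctions_closure_eq_top 0 M
    have h2 : fM ∈ (polynomialFunctions (Set.Icc (0:ℝ) M)).topologicalClosure := by
      rw [h1]; trivial
    exact h2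
  obtain ⟨g, hgmem, hglim⟩ := mem_closure_iff_seq_limit.mp hmem
  choose q hq using fun n => by
    have h3 := hgmem n
    rw [polynomialFunctions_coe, Set.mem_range] at h3
    exact h3
  have keynorm : ∀ (W : H →L[ℂ] H), 0 ≤ W → spectrum ℝ W ⊆ Set.Icc 0 M →
      Filter.Tendsto (fun n => cfc (fun x => Polynomial.eval x (q n)) W) Filter.atTop
        (nhds (cfc f W)) := by
    intro W hW hsp
    rw [← tendsto_sub_nhds_zero_iff]
    have hb : ∀ n, ‖cfc (fun x => Polynomial.eval x (q n)) W - cfc f W‖ ≤ ‖g n - fM‖ := by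
      intro n
      rw [(cfc_sub (fun x => Polynomial.eval x (q n)) f W (by fun_prop) hf.continuousOn).symm]
      refine norm_cfc_le (norm_nonneg _) fun x hx => ?_
      have hx' : x ∈ Set.Icc (0:ℝ) M := hsp hx
      have hxeq : (g n - fM) ⟨x, hx'⟩ = Polynomial.eval x (q n) - f x := by
        simp [← hq n, fM]
      calc ‖Polynomial.eval x (q n) - f x‖ = ‖(g n - fM) ⟨x, hx'⟩‖ := by rw [hxeq]
        _ ≤ ‖g n - fM‖ := ContinuousMap.norm_coe_le_norm _ _
    have hgz : Filter.Tendsto (fun n => ‖g n - fM‖) Filter.atTop (nhds 0) := by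
      rw [← tendsto_sub_nhds_zero_iff] at hglim
      simpa using hglim.norm
    exact squeeze_zero_norm hb hgz
  have h1 := keynorm P hP hspP
  have h2 := keynorm Q hQ hspQ
  have heq : ∀ n, t * cfc (fun x => Polynomial.eval x (q n)) P
      = cfc (fun x => Polynomial.eval x (q n)) Q * t := by
    intro n
    rw [cfc_polynomial (q n) P (IsSelfAdjoint.of_nonneg hP),
      cfc_polynomial (q n) Q (IsSelfAdjoint.of_nonneg hQ)]
    exact aeval_comm' h (q n)
  exact tendsto_nhds_unique ((h1.const_mul t).congr fun n => (heq n)) (h2.mul_const t)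

lemma cfc_sqrt_eq {P : H →L[ℂ] H} (hP : 0 ≤ P) : CFC.sqrt P = cfc Real.sqrt P := by
  refine CFC.sqrt_unique ?_ ?_
  · rw [← cfc_mul ..]
    calc cfc (fun x => Real.sqrt x * Real.sqrt x) P = cfc (id : ℝ → ℝ) P := by
          refine cfc_congr fun x hx => ?_
          have hx0 : 0 ≤ x := spectrum_nonneg_of_nonneg hP hx
          simp [Real.mul_self_sqrt hx0]
      _ = P := cfc_id ℝ P
  · exact cfc_nonneg fun x hx => Real.sqrt_nonneg x

lemma intertwine_sqrt [Nontrivial H] (T : H →L[ℂ] H) :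
    T * CFC.sqrt (adjoint T * T) = CFC.sqrt (T * adjoint T) * T := by
  have hP : (0:H →L[ℂ] H) ≤ adjoint T * T := by
    simpa [ContinuousLinearMap.star_eq_adjoint] using star_mul_self_nonneg T
  have hQ : (0:H →L[ℂ] H) ≤ T * adjoint T := by
    simpa [ContinuousLinearMap.star_eq_adjoint] using mul_star_self_nonneg T
  rw [cfc_sqrt_eq hP, cfc_sqrt_eq hQ]
  exact intertwine_cfc hP hQ (mul_assoc T (adjoint T) T).symm Real.continuous_sqrt


lemma re_inner_symm (u v : H) : (⟪u, v⟫ : ℂ).re = (⟪v, u⟫ : ℂ).re := by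
  rw [← inner_conj_symm v u, Complex.conj_re]

lemma key_eps [Nontrivial H] (T : H →L[ℂ] H) (x : H) (hx : ‖x‖ = 1) {ε : ℝ} (hε : 0 < ε) :
    ‖(⟪T x, x⟫ : ℂ)‖ ^ 2 ≤
      (Complex.re ⟪CFC.sqrt (adjoint T * T) x, x⟫ + ε)
        * Complex.re ⟪CFC.sqrt (T * adjoint T) x, x⟫ := by
  have hP : (0:H →L[ℂ] H) ≤ adjoint T * T := by
    simpa [ContinuousLinearMap.star_eq_adjoint] using star_mul_self_nonneg T
  have hQ : (0:H →L[ℂ] H) ≤ T * adjoint T := by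
    simpa [ContinuousLinearMap.star_eq_adjoint] using mul_star_self_nonneg T
  set A := CFC.sqrt (adjoint T * T) with hAdef
  set B := CFC.sqrt (T * adjoint T) with hBdef
  have hA : (0:H →L[ℂ] H) ≤ A := CFC.sqrt_nonneg _
  have hB : (0:H →L[ℂ] H) ≤ B := CFC.sqrt_nonneg _
  have hAsa : IsSelfAdjoint A := .of_nonneg hA
  have hBsa : IsSelfAdjoint B := .of_nonneg hB
  have hTA : T * A = B * T := intertwine_sqrt T
  set sf : ℝ → ℝ := fun y => Real.sqrt (max y 0 + ε) with hsf
  set gf : ℝ → ℝ := fun y => (Real.sqrt (max y 0 + ε))⁻¹ with hgf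
  set jf : ℝ → ℝ := fun y => (max y 0 + ε)⁻¹ with hjf
  have hpos : ∀ y : ℝ, 0 < Real.sqrt (max y 0 + ε) := fun y =>
    Real.sqrt_pos.mpr (by positivity)
  have hcs : Continuous sf := by fun_prop
  have hcg : Continuous gf := Continuous.inv₀ (by fun_prop) (fun y => (hpos y).ne')
  have hcj : Continuous jf := Continuous.inv₀ (by fun_prop) (fun y => by positivity)
  set S := cfc sf A with hSdef
  set R := cfc gf A with hRdef
  have hSsa : IsSelfAdjoint S := cfc_predicate sf A
  have hRsa : IsSelfAdjoint R := cfc_predicate gf A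
  have hRS : R * S = 1 := by
    rw [← cfc_mul gf sf A hcg.continuousOn hcs.continuousOn]
    calc cfc (fun y => gf y * sf y) A = cfc (fun _ : ℝ => (1:ℝ)) A := by
          refine cfc_congr fun y _ => ?_
          exact inv_mul_cancel₀ (hpos y).ne'
      _ = 1 := cfc_const_one ℝ A
  have hSS : S * S = A + algebraMap ℝ (H →L[ℂ] H) ε := by
    rw [← cfc_mul sf sf A hcs.continuousOn hcs.continuousOn]
    calc cfc (fun y => sf y * sf y) A = cfc (fun y : ℝ => y + ε) A := by
          refine cfc_congr fun y hy => ?_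
          have hy0 : 0 ≤ y := spectrum_nonneg_of_nonneg hA hy
          rw [hsf]
          simp only
          rw [Real.mul_self_sqrt (by positivity), max_eq_left hy0]
      _ = A + algebraMap ℝ (H →L[ℂ] H) ε := by
          rw [cfc_add_const ε (fun y : ℝ => y) A, cfc_id' ℝ A]
  have hRR : R * R = cfc jf A := by
    rw [← cfc_mul gf gf A hcg.continuousOn hcg.continuousOn]
    refine cfc_congr fun y _ => ?_
    rw [hgf, hjf]
    simp only
    rw [← mul_inv, Real.mul_self_sqrt (by positivity)]
  -- the operator D = T (A+ε)⁻¹ T* and its bound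
  have hTj : T * cfc jf A = cfc jf B * T := intertwine_cfc hA hB hTA hcj
  have hBB : B * B = T * adjoint T := CFC.sqrt_mul_sqrt_self _ hQ
  have hD_le : T * cfc jf A * adjoint T ≤ B := by
    have h1 : T * cfc jf A * adjoint T = cfc jf B * (B * B) := by
      rw [hTj, mul_assoc, hBB]
    have h2 : cfc (fun y : ℝ => jf y * (y * y)) B = cfc jf B * (B * B) := by
      rw [cfc_mul jf (fun y => y * y) B hcj.continuousOn (by fun_prop),
        cfc_mul (fun y : ℝ => y) (fun y : ℝ => y) B (by fun_prop) (by fun_prop), cfc_id' ℝ B]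
    rw [h1, ← h2]
    calc cfc (fun y : ℝ => jf y * (y * y)) B ≤ cfc (fun y : ℝ => y) B := by
          refine cfc_mono (fun y hy => ?_) ((hcj.mul (by fun_prop)).continuousOn) (by fun_prop)
          have hy0 : 0 ≤ y := spectrum_nonneg_of_nonneg hB hy
          rw [hjf]
          simp only [max_eq_left hy0]
          have h3 : (y + ε)⁻¹ * (y * y) ≤ (y + ε)⁻¹ * ((y + ε) * y) := by
            apply mul_le_mul_of_nonneg_left _ (by positivity)
            nlinarith
          calc (y + ε)⁻¹ * (y * y) ≤ (y + ε)⁻¹ * ((y + ε) * y) := h3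
            _ = y := by field_simp
      _ = B := cfc_id' ℝ B
  -- vector computations
  have hx1 : (⟪x, x⟫ : ℂ) = 1 := by
    rw [inner_self_eq_norm_sq_to_K (𝕜 := ℂ) x, hx]
    norm_num
  set w := adjoint T x with hw
  have hxRS : R (S x) = x := by
    have h0 := congrArg (fun (E : H →L[ℂ] H) => E x) hRS
    simpa using h0
  have hc : (⟪T x, x⟫ : ℂ) = ⟪S x, R w⟫ := by
    calc (⟪T x, x⟫ : ℂ) = ⟪x, w⟫ := (ContinuousLinearMap.adjoint_inner_right T x x).symm
      _ = ⟪R (S x), w⟫ := by rw [hxRS]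
      _ = ⟪S x, R w⟫ := by simpa using hRsa.isSymmetric (S x) w
  have hnormS : ‖S x‖ ^ 2 = Complex.re ⟪A x, x⟫ + ε := by
    have happ : S (S x) = A x + ε • x := by
      have h0 := congrArg (fun (E : H →L[ℂ] H) => E x) hSS
      simpa [Algebra.algebraMap_eq_smul_one] using h0
    have h1 : (⟪S x, S x⟫ : ℂ) = ⟪x, A x⟫ + (ε : ℂ) := by
      calc (⟪S x, S x⟫ : ℂ) = ⟪x, S (S x)⟫ := by simpa using hSsa.isSymmetric x (S x)
        _ = ⟪x, A x + ε • x⟫ := by rw [happ]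
        _ = ⟪x, A x⟫ + (ε : ℂ) := by
            rw [inner_add_right]
            congr 1
            have hsm : ε • x = (ε : ℂ) • x := by norm_cast
            rw [hsm, inner_smul_right, hx1, mul_one]
    rw [norm_sq_eq_re_inner (𝕜 := ℂ), h1]
    simp only [RCLike.re_to_complex, Complex.add_re, Complex.ofReal_re]
    rw [re_inner_symm]
  have hreA : 0 ≤ Complex.re ⟪A x, x⟫ :=
    ((ContinuousLinearMap.nonneg_iff_isPositive A).mp hA).re_inner_nonneg_left x
  have hreB : 0 ≤ Complex.re ⟪B x, x⟫ :=
    ((ContinuousLinearMap.nonneg_iff_isPositive B).mp hB).re_inner_nonneg_left x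
  have hnormR : ‖R w‖ ^ 2 ≤ Complex.re ⟪B x, x⟫ := by
    have happ : R (R w) = cfc jf A w := by
      have h0 := congrArg (fun (E : H →L[ℂ] H) => E w) hRR
      simpa using h0
    have h1 : (⟪R w, R w⟫ : ℂ) = ⟪x, (T * cfc jf A * adjoint T) x⟫ := by
      calc (⟪R w, R w⟫ : ℂ) = ⟪w, R (R w)⟫ := by simpa using hRsa.isSymmetric w (R w)
        _ = ⟪w, cfc jf A w⟫ := by rw [happ]
        _ = ⟪x, T (cfc jf A w)⟫ := by
            rw [hw, ContinuousLinearMap.adjoint_inner_left]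
        _ = ⟪x, (T * cfc jf A * adjoint T) x⟫ := by
            simp [ContinuousLinearMap.mul_apply, hw]
    have h2 : 0 ≤ Complex.re ⟪x, (B - T * cfc jf A * adjoint T) x⟫ :=
      ((ContinuousLinearMap.nonneg_iff_isPositive _).mp
        (sub_nonneg.mpr hD_le)).re_inner_nonneg_right x
    have h3 : Complex.re ⟪x, (B - T * cfc jf A * adjoint T) x⟫
        = Complex.re ⟪x, B x⟫ - Complex.re ⟪x, (T * cfc jf A * adjoint T) x⟫ := by
      rw [ContinuousLinearMap.sub_apply, inner_sub_right, Complex.sub_re]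
    rw [norm_sq_eq_re_inner (𝕜 := ℂ), h1]
    rw [h3] at h2
    simp only [RCLike.re_to_complex]
    rw [re_inner_symm (B x) x]
    linarith
  calc ‖(⟪T x, x⟫ : ℂ)‖ ^ 2 = ‖(⟪S x, R w⟫ : ℂ)‖ ^ 2 := by rw [hc]
    _ ≤ (‖S x‖ * ‖R w‖) ^ 2 :=
        pow_le_pow_left₀ (norm_nonneg _) (norm_inner_le_norm (𝕜 := ℂ) (S x) (R w)) 2
    _ = ‖S x‖ ^ 2 * ‖R w‖ ^ 2 := mul_pow _ _ 2
    _ ≤ (Complex.re ⟪A x, x⟫ + ε) * Complex.re ⟪B x, x⟫ := by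
        rw [hnormS]
        exact mul_le_mul_of_nonneg_left hnormR (by positivity)

lemma key_ineq [Nontrivial H] (T : H →L[ℂ] H) (x : H) (hx : ‖x‖ = 1) :
    ((⟪T x, x⟫ : ℂ).re) ^ 2 ≤
      Complex.re ⟪CFC.sqrt (adjoint T * T) x, x⟫
        * Complex.re ⟪CFC.sqrt (T * adjoint T) x, x⟫ := by
  set a := Complex.re ⟪CFC.sqrt (adjoint T * T) x, x⟫ with ha
  set b := Complex.re ⟪CFC.sqrt (T * adjoint T) x, x⟫ with hb
  have hb0 : 0 ≤ b := by
    rw [hb]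
    exact ((ContinuousLinearMap.nonneg_iff_isPositive
      (CFC.sqrt (T * adjoint T))).mp (CFC.sqrt_nonneg _)).re_inner_nonneg_left x
  have hre : ((⟪T x, x⟫ : ℂ).re) ^ 2 ≤ ‖(⟪T x, x⟫ : ℂ)‖ ^ 2 := by
    rw [Complex.sq_norm, Complex.normSq_apply]
    nlinarith [sq_nonneg (⟪T x, x⟫ : ℂ).im]
  refine le_trans hre (le_of_forall_pos_le_add fun δ hδ => ?_)
  have hε : 0 < δ / (b + 1) := by positivity
  calc ‖(⟪T x, x⟫ : ℂ)‖ ^ 2 ≤ (a + δ / (b + 1)) * b := key_eps T x hx hε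
    _ = a * b + (δ / (b + 1)) * b := by ring
    _ ≤ a * b + δ := by
        have h5 : (δ / (b + 1)) * b ≤ δ := by
          rw [div_mul_eq_mul_div, div_le_iff₀ (by linarith)]
          nlinarith
        linarith

end Aux

local notation "⟪" x ", " y "⟫" => @inner ℂ _ _ x y

theorem numRad_re_bound (T : H →L[ℂ] H) :
    numRad ((1 / 2 : ℂ) • (CFC.sqrt (adjoint T ∘L T) - CFC.sqrt (T ∘L adjoint T)) +
        Complex.I • ((1 / 2 : ℂ) • (T + adjoint T))) ≤
      (1 / 2) * ‖CFC.sqrt (adjoint T ∘L T) + CFC.sqrt (T ∘L adjoint T)‖ := by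
  refine Real.iSup_le (fun p => ?_) (by positivity)
  obtain ⟨x, hx⟩ := p
  have hnt : Nontrivial H := by
    refine ⟨⟨x, 0, fun h => ?_⟩⟩
    rw [h, norm_zero] at hx
    norm_num at hx
  have hco1 : CFC.sqrt (adjoint T ∘L T) = CFC.sqrt (adjoint T * T) := rfl
  have hco2 : CFC.sqrt (T ∘L adjoint T) = CFC.sqrt (T * adjoint T) := rfl
  simp only [hco1, hco2]
  set A := CFC.sqrt (adjoint T * T) with hAdef
  set B := CFC.sqrt (T * adjoint T) with hBdef
  have hA : (0:H →L[ℂ] H) ≤ A := CFC.sqrt_nonneg _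
  have hB : (0:H →L[ℂ] H) ≤ B := CFC.sqrt_nonneg _
  have hAsa : IsSelfAdjoint A := .of_nonneg hA
  have hBsa : IsSelfAdjoint B := .of_nonneg hB
  set a := Complex.re ⟪A x, x⟫ with ha
  set b := Complex.re ⟪B x, x⟫ with hb
  have ha0 : 0 ≤ a :=
    ((ContinuousLinearMap.nonneg_iff_isPositive _).mp hA).re_inner_nonneg_left x
  have hb0 : 0 ≤ b :=
    ((ContinuousLinearMap.nonneg_iff_isPositive _).mp hB).re_inner_nonneg_left x
  set c : ℂ := ⟪T x, x⟫ with hc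
  have hAreal : (⟪A x, x⟫ : ℂ) = (a : ℂ) := by
    have hsymm : (⟪A x, x⟫ : ℂ) = ⟪x, A x⟫ := by simpa using hAsa.isSymmetric x x
    have hconj : (starRingEnd ℂ) ⟪A x, x⟫ = ⟪A x, x⟫ := by
      rw [inner_conj_symm, ← hsymm]
    exact (Complex.conj_eq_iff_re.mp hconj).symm
  have hBreal : (⟪B x, x⟫ : ℂ) = (b : ℂ) := by
    have hsymm : (⟪B x, x⟫ : ℂ) = ⟪x, B x⟫ := by simpa using hBsa.isSymmetric x x
    have hconj : (starRingEnd ℂ) ⟪B x, x⟫ = ⟪B x, x⟫ := by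
      rw [inner_conj_symm, ← hsymm]
    exact (Complex.conj_eq_iff_re.mp hconj).symm
  have hTstar : (⟪adjoint T x, x⟫ : ℂ) = (starRingEnd ℂ) c := by
    rw [ContinuousLinearMap.adjoint_inner_left, hc, ← inner_conj_symm]
  have hz : (⟪((1/2 : ℂ) • (A - B) + Complex.I • ((1/2 : ℂ) • (T + adjoint T))) x, x⟫ : ℂ)
      = (((a - b)/2 : ℝ) : ℂ) - Complex.I * ((c.re : ℝ) : ℂ) := by
    simp only [ContinuousLinearMap.add_apply, ContinuousLinearMap.smul_apply,
      ContinuousLinearMap.sub_apply, inner_add_left, inner_smul_left, inner_sub_left,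
      hAreal, hBreal, hTstar, ← hc]
    rw [Complex.add_conj]
    simp only [map_div₀, map_one, Complex.conj_ofNat, Complex.conj_I]
    push_cast
    ring
  have hkey : c.re ^ 2 ≤ a * b := key_ineq T x hx
  have hnorm2 : ‖(⟪((1/2 : ℂ) • (A - B) + Complex.I • ((1/2 : ℂ) • (T + adjoint T))) x, x⟫ : ℂ)‖ ^ 2
      = ((a - b)/2)^2 + c.re^2 := by
    rw [hz, Complex.sq_norm, Complex.normSq_apply]
    simp [Complex.sub_re, Complex.sub_im, Complex.mul_re, Complex.mul_im]
    ring
  have hle : ‖(⟪((1/2 : ℂ) • (A - B) + Complex.I • ((1/2 : ℂ) • (T + adjoint T))) x, x⟫ : ℂ)‖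
      ≤ (a + b)/2 := by
    have h0 : 0 ≤ (a + b)/2 := by linarith
    have hle2 : ‖(⟪((1/2 : ℂ) • (A - B) + Complex.I • ((1/2 : ℂ) • (T + adjoint T))) x, x⟫ : ℂ)‖ ^ 2
        ≤ ((a + b)/2)^2 := by
      rw [hnorm2]; nlinarith
    exact (pow_le_pow_iff_left₀ (norm_nonneg _) h0 (by norm_num)).mp hle2
  have hfin : a + b ≤ ‖A + B‖ := by
    have h1 : (⟪(A + B) x, x⟫ : ℂ).re = a + b := by
      simp [ContinuousLinearMap.add_apply, inner_add_left, ha, hb]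
    calc a + b = (⟪(A + B) x, x⟫ : ℂ).re := h1.symm
      _ ≤ ‖(⟪(A + B) x, x⟫ : ℂ)‖ := by
          exact Complex.re_le_norm _
      _ ≤ ‖(A + B) x‖ * ‖x‖ := norm_inner_le_norm _ _
      _ ≤ (‖A + B‖ * ‖x‖) * ‖x‖ :=
          mul_le_mul_of_nonneg_right ((A + B).le_opNorm x) (norm_nonneg x)
      _ = ‖A + B‖ := by rw [hx]; ring
  calc ‖(⟪((1/2 : ℂ) • (A - B) + Complex.I • ((1/2 : ℂ) • (T + adjoint T))) x, x⟫ : ℂ)‖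
      ≤ (a + b)/2 := hle
    _ ≤ (1/2) * ‖A + B‖ := by linarith
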